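/- For every integer n ≥ 2, the function ψ_n(x) = x·M_{n−1}(x)/(1−x)³ is strictly increasing on [0,1), where M_m(x) = m² + (−2m² − 2m + 1)x + (m+1)²x² − x^{m+1} − x^{m+2}. -/

import Mathlib

lemma key_factor (m : ℕ) (x : ℝ) :
    (m:ℝ)^2 + (-(2*(m:ℝ)^2) - 2*(m:ℝ) + 1) * x + ((m:ℝ)+1)^2 * x^2 - x^(m+1) - x^(m+2)
      = (1-x)^3 * ∑ i ∈ Finset.range m, ((m:ℝ) - i)^2 * x^i := by
  induction m with
  | zero => simp
  | succ m ih =>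
    rw [Finset.sum_range_succ']
    push_cast
    have hsum : ∑ i ∈ Finset.range m, (((m:ℝ)+1) - ((i:ℝ)+1))^2 * x^(i+1)
        = (∑ i ∈ Finset.range m, ((m:ℝ) - i)^2 * x^i) * x := by
      rw [Finset.sum_mul]
      apply Finset.sum_congr rfl
      intro i _
      ring
    rw [hsum]
    linear_combination x * ih

theorem psi_strictMono (n : ℕ) (hn : 2 ≤ n) :
    StrictMonoOn
      (fun x : ℝ =>
        x * (((n : ℝ) - 1)^2 + (-(2*((n:ℝ)-1)^2) - 2*((n:ℝ)-1) + 1) * x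
          + (n:ℝ)^2 * x^2 - x^n - x^(n+1)) / (1 - x)^3)
      (Set.Ico (0:ℝ) 1) := by
  obtain ⟨m, rfl⟩ : ∃ m, n = m + 1 := ⟨n - 1, by omega⟩
  have hm : 1 ≤ m := by omega
  intro x hx y hy hxy
  simp only []
  have heq : ∀ z : ℝ, z < 1 →
      z * (((↑(m+1) : ℝ) - 1)^2 + (-(2*((↑(m+1):ℝ)-1)^2) - 2*((↑(m+1):ℝ)-1) + 1) * z
          + (↑(m+1):ℝ)^2 * z^2 - z^(m+1) - z^(m+1+1)) / (1 - z)^3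
      = z * ∑ i ∈ Finset.range m, ((m:ℝ) - i)^2 * z^i := by
    intro z hz
    have h1z : (1 - z)^3 ≠ 0 := pow_ne_zero _ (by linarith)
    have hk := key_factor m z
    have hnum : ((↑(m+1) : ℝ) - 1)^2 + (-(2*((↑(m+1):ℝ)-1)^2) - 2*((↑(m+1):ℝ)-1) + 1) * z
          + (↑(m+1):ℝ)^2 * z^2 - z^(m+1) - z^(m+1+1)
        = (1-z)^3 * ∑ i ∈ Finset.range m, ((m:ℝ) - i)^2 * z^i := by
      push_cast
      linear_combination hk
    rw [hnum]
    rw [mul_div_assoc, mul_div_cancel_left₀ _ h1z]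
  rw [heq x hx.2, heq y hy.2]
  have hy0 : 0 < y := lt_of_le_of_lt hx.1 hxy
  have hQpos : 0 < ∑ i ∈ Finset.range m, ((m:ℝ) - i)^2 * y^i := by
    apply Finset.sum_pos
    · intro i hi
      have hi' : i < m := Finset.mem_range.mp hi
      have : (i:ℝ) < m := by exact_mod_cast hi'
      have h1 : (0:ℝ) < ((m:ℝ) - i) := by linarith
      exact mul_pos (pow_pos h1 2) (pow_pos hy0 i)
    · exact Finset.nonempty_range_iff.mpr (by omega)
  have hQle : (∑ i ∈ Finset.range m, ((m:ℝ) - i)^2 * x^i)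
      ≤ ∑ i ∈ Finset.range m, ((m:ℝ) - i)^2 * y^i := by
    apply Finset.sum_le_sum
    intro i _
    exact mul_le_mul_of_nonneg_left (pow_le_pow_left₀ hx.1 hxy.le i) (sq_nonneg _)
  calc x * ∑ i ∈ Finset.range m, ((m:ℝ) - i)^2 * x^i
      ≤ x * ∑ i ∈ Finset.range m, ((m:ℝ) - i)^2 * y^i :=
        mul_le_mul_of_nonneg_left hQle hx.1
    _ < y * ∑ i ∈ Finset.range m, ((m:ℝ) - i)^2 * y^i :=
        mul_lt_mul_of_pos_right hxy hQpos
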